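/- Let F be a block matrix [[F_a, F_b],[F_c, F_d]] with F_d invertible, G = [G_a; G_b] (stacked), H = [H_a, H_b], K arbitrary, of compatible dimensions. Define the singularly perturbed transfer function Φ_ε(s) = [H_a, H_b] (sI - [[F_a, F_b],[F_c/ε, F_d/ε]])^{-1} [G_a; G_b/ε] + K and the reduced transfer function Φ₀(s) = H₀ (sI - F₀)^{-1} G₀ + K₀ where F₀ = F_a - F_b F_d^{-1} F_c, G₀ = G_a - F_b F_d^{-1} G_b, H₀ = H_a - H_b F_d^{-1} F_c, K₀ = K - H_b F_d^{-1} G_b. Then for each fixed s that is not an eigenvalue of F₀, Φ_ε(s) → Φ₀(s) as ε → 0⁺. -/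

import Mathlib

open Matrix Filter

noncomputable section

lemma tendsto_matrix_inv' {α : Type*} {l : Filter α} {n : ℕ}
    {f : α → Matrix (Fin n) (Fin n) ℂ} {A : Matrix (Fin n) (Fin n) ℂ}
    (hf : Tendsto f l (nhds A)) (hA : A.det ≠ 0) :
    Tendsto (fun x => (f x)⁻¹) l (nhds A⁻¹) := by
  have hdet : Tendsto (fun x => (f x).det) l (nhds A.det) :=
    ((continuous_id.matrix_det).tendsto A).comp hf
  have hadj : Tendsto (fun x => (f x).adjugate) l (nhds A.adjugate) :=
    ((continuous_id.matrix_adjugate).tendsto A).comp hf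
  have hinv : Tendsto (fun x => ((f x).det)⁻¹) l (nhds (A.det)⁻¹) := hdet.inv₀ hA
  have h : Tendsto (fun x => ((f x).det)⁻¹ • (f x).adjugate) l (nhds ((A.det)⁻¹ • A.adjugate)) :=
    hinv.smul hadj
  simpa only [Matrix.inv_def, Ring.inverse_eq_inv'] using h

lemma aux_eq {n₁ n₂ m : ℕ}
    (Fa : Matrix (Fin n₁) (Fin n₁) ℂ) (Fb : Matrix (Fin n₁) (Fin n₂) ℂ)
    (Fc : Matrix (Fin n₂) (Fin n₁) ℂ) (Fd : Matrix (Fin n₂) (Fin n₂) ℂ)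
    (Ga : Matrix (Fin n₁) (Fin m) ℂ) (Gb : Matrix (Fin n₂) (Fin m) ℂ)
    (Ha : Matrix (Fin m) (Fin n₁) ℂ) (Hb : Matrix (Fin m) (Fin n₂) ℂ)
    (s : ℂ) (ε : ℝ) (hε : 0 < ε)
    (E S : Matrix _ _ ℂ)
    (hE : E = ((ε : ℂ) • s • (1 : Matrix (Fin n₂) (Fin n₂) ℂ) - Fd)⁻¹)
    (hS : S = s • (1 : Matrix (Fin n₁) (Fin n₁) ℂ) - Fa - Fb * E * Fc)
    (hd1 : IsUnit ((ε : ℂ) • s • (1 : Matrix (Fin n₂) (Fin n₂) ℂ) - Fd).det)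
    (hd2 : IsUnit S.det) :
    Matrix.fromCols Ha Hb *
        (s • (1 : Matrix (Fin n₁ ⊕ Fin n₂) (Fin n₁ ⊕ Fin n₂) ℂ) -
          Matrix.fromBlocks Fa Fb (((ε : ℂ)⁻¹) • Fc) (((ε : ℂ)⁻¹) • Fd))⁻¹ *
        Matrix.fromRows Ga (((ε : ℂ)⁻¹) • Gb) =
      (Ha * S⁻¹ + Hb * (E * Fc * S⁻¹)) * Ga +
        (Ha * (S⁻¹ * Fb * E) + Hb * (E + E * Fc * S⁻¹ * Fb * E)) * Gb := by
  have hεC : (ε : ℂ) ≠ 0 := by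
    exact_mod_cast ne_of_gt hε
  set c : ℂ := (ε : ℂ)⁻¹ with hc
  have hce : (ε : ℂ) * c = 1 := mul_inv_cancel₀ hεC
  have hec : c * (ε : ℂ) = 1 := inv_mul_cancel₀ hεC
  set Din : Matrix (Fin n₂) (Fin n₂) ℂ := (ε : ℂ) • s • 1 - Fd with hDin
  set A : Matrix (Fin n₁) (Fin n₁) ℂ := s • 1 - Fa with hA
  set B : Matrix (Fin n₁) (Fin n₂) ℂ := -Fb with hB
  set C : Matrix (Fin n₂) (Fin n₁) ℂ := -(c • Fc) with hC
  set D : Matrix (Fin n₂) (Fin n₂) ℂ := s • 1 - c • Fd with hD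
  have hDc : D = c • Din := by
    rw [hD, hDin, smul_sub, smul_smul, hec, one_smul]
  -- the big matrix as blocks
  have hM : (s • (1 : Matrix (Fin n₁ ⊕ Fin n₂) (Fin n₁ ⊕ Fin n₂) ℂ) -
      Matrix.fromBlocks Fa Fb (c • Fc) (c • Fd)) = Matrix.fromBlocks A B C D := by
    rw [← fromBlocks_one, fromBlocks_smul, sub_eq_add_neg, fromBlocks_neg, fromBlocks_add]
    simp [hA, hB, hC, hD, sub_eq_add_neg]
  have hdD : IsUnit D.det := by
    rw [hDc, det_smul]
    exact (IsUnit.pow _ (Ne.isUnit (inv_ne_zero hεC))).mul hd1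
  have hDinv : D⁻¹ = (ε : ℂ) • E := by
    apply inv_eq_right_inv
    rw [hDc, hE, smul_mul_smul_comm, hec, one_smul]
    exact mul_nonsing_inv _ hd1
  have hSinv : S * S⁻¹ = 1 := mul_nonsing_inv _ hd2
  letI iD : Invertible D := D.invertibleOfIsUnitDet hdD
  have hschur : A - B * D⁻¹ * C = S := by
    rw [hDinv, hS, hB, hC]
    simp only [Matrix.neg_mul, Matrix.mul_neg, neg_neg, Matrix.mul_smul, Matrix.smul_mul,
      smul_smul, hce, hec, one_smul, Matrix.mul_assoc]
  have hschur' : A - B * ⅟D * C = S := by rw [invOf_eq_nonsing_inv]; exact hschur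
  letI iS : Invertible S := S.invertibleOfIsUnitDet hd2
  letI iS' : Invertible (A - B * ⅟D * C) := iS.copy _ hschur'
  letI iM : Invertible (Matrix.fromBlocks A B C D) := fromBlocks₂₂Invertible A B C D
  have hMinv : (Matrix.fromBlocks A B C D)⁻¹ =
      Matrix.fromBlocks S⁻¹ (-(S⁻¹ * B * D⁻¹)) (-(D⁻¹ * C * S⁻¹))
        (D⁻¹ + D⁻¹ * C * S⁻¹ * B * D⁻¹) := by
    rw [← invOf_eq_nonsing_inv, invOf_fromBlocks₂₂_eq]
    simp only [invOf_eq_nonsing_inv]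
    rw [hschur]
  rw [hc] at hM
  rw [hM, hMinv, fromCols_mul_fromBlocks, fromCols_mul_fromRows]
  rw [hB, hC, hDinv]
  simp only [Matrix.neg_mul, Matrix.mul_neg, neg_neg, Matrix.mul_smul, Matrix.smul_mul,
    smul_smul, hce, hec, one_smul, Matrix.mul_assoc, smul_add, Matrix.mul_add,
    Matrix.add_mul, smul_add, smul_neg, neg_smul, neg_neg]

theorem stmt10 (n₁ n₂ m : ℕ)
    (Fa : Matrix (Fin n₁) (Fin n₁) ℂ) (Fb : Matrix (Fin n₁) (Fin n₂) ℂ)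
    (Fc : Matrix (Fin n₂) (Fin n₁) ℂ) (Fd : Matrix (Fin n₂) (Fin n₂) ℂ)
    (Ga : Matrix (Fin n₁) (Fin m) ℂ) (Gb : Matrix (Fin n₂) (Fin m) ℂ)
    (Ha : Matrix (Fin m) (Fin n₁) ℂ) (Hb : Matrix (Fin m) (Fin n₂) ℂ)
    (K : Matrix (Fin m) (Fin m) ℂ)
    (hFd : IsUnit Fd)
    (F₀ : Matrix (Fin n₁) (Fin n₁) ℂ) (hF₀ : F₀ = Fa - Fb * Fd⁻¹ * Fc)
    (G₀ : Matrix (Fin n₁) (Fin m) ℂ) (hG₀ : G₀ = Ga - Fb * Fd⁻¹ * Gb)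
    (H₀ : Matrix (Fin m) (Fin n₁) ℂ) (hH₀ : H₀ = Ha - Hb * Fd⁻¹ * Fc)
    (K₀ : Matrix (Fin m) (Fin m) ℂ) (hK₀ : K₀ = K - Hb * Fd⁻¹ * Gb)
    (Φ : ℝ → ℂ → Matrix (Fin m) (Fin m) ℂ)
    (hΦ : ∀ ε : ℝ, ∀ s : ℂ, Φ ε s =
      Matrix.fromCols Ha Hb *
        (s • (1 : Matrix (Fin n₁ ⊕ Fin n₂) (Fin n₁ ⊕ Fin n₂) ℂ) -
          Matrix.fromBlocks Fa Fb ((ε⁻¹ : ℂ) • Fc) ((ε⁻¹ : ℂ) • Fd))⁻¹ *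
        Matrix.fromRows Ga ((ε⁻¹ : ℂ) • Gb) + K)
    (Φ₀ : ℂ → Matrix (Fin m) (Fin m) ℂ)
    (hΦ₀ : ∀ s : ℂ, Φ₀ s =
      H₀ * (s • (1 : Matrix (Fin n₁) (Fin n₁) ℂ) - F₀)⁻¹ * G₀ + K₀)
    (s : ℂ) (hs : IsUnit (s • (1 : Matrix (Fin n₁) (Fin n₁) ℂ) - F₀)) :
    ∀ i j, Tendsto (fun ε : ℝ => Φ ε s i j)
      (nhdsWithin 0 (Set.Ioi 0)) (nhds (Φ₀ s i j)) := by
  set l : Filter ℝ := nhdsWithin 0 (Set.Ioi 0) with hl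
  have hFdDet : IsUnit Fd.det := (Matrix.isUnit_iff_isUnit_det Fd).mp hFd
  have hFdDet' : Fd.det ≠ 0 := hFdDet.ne_zero
  set Dfun : ℝ → Matrix (Fin n₂) (Fin n₂) ℂ :=
    fun ε => (ε : ℂ) • s • (1 : Matrix (Fin n₂) (Fin n₂) ℂ) - Fd with hDfun
  set Efun : ℝ → Matrix (Fin n₂) (Fin n₂) ℂ := fun ε => (Dfun ε)⁻¹ with hEfun
  set Sfun : ℝ → Matrix (Fin n₁) (Fin n₁) ℂ :=
    fun ε => s • (1 : Matrix (Fin n₁) (Fin n₁) ℂ) - Fa - Fb * Efun ε * Fc with hSfun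
  have hD0 : Dfun 0 = -Fd := by simp [hDfun]
  have hD0det : (Dfun 0).det ≠ 0 := by
    rw [hD0, Matrix.det_neg]
    exact mul_ne_zero (pow_ne_zero _ (by norm_num)) hFdDet'
  have hE0 : (-Fd)⁻¹ = -Fd⁻¹ := by
    apply Matrix.inv_eq_right_inv
    rw [neg_mul_neg]
    exact Matrix.mul_nonsing_inv _ hFdDet
  have hDcont : Continuous Dfun := by
    exact (Complex.continuous_ofReal.smul continuous_const).sub continuous_const
  have hDt : Tendsto Dfun l (nhds (Dfun 0)) :=
    ((hDcont.tendsto 0).mono_left nhdsWithin_le_nhds)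
  have hEt : Tendsto Efun l (nhds (-Fd⁻¹)) := by
    have := tendsto_matrix_inv' hDt hD0det
    rwa [hD0, hE0] at this
  have hS0 : s • (1 : Matrix (Fin n₁) (Fin n₁) ℂ) - Fa - Fb * (-Fd⁻¹) * Fc
      = s • (1 : Matrix (Fin n₁) (Fin n₁) ℂ) - F₀ := by
    rw [hF₀]
    simp only [Matrix.mul_neg, Matrix.neg_mul, sub_neg_eq_add]
    abel
  have hGc : Continuous (fun M : Matrix (Fin n₂) (Fin n₂) ℂ =>
      s • (1 : Matrix (Fin n₁) (Fin n₁) ℂ) - Fa - Fb * M * Fc) :=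
    continuous_const.sub ((continuous_const.matrix_mul continuous_id).matrix_mul continuous_const)
  have hSt : Tendsto Sfun l (nhds (s • (1 : Matrix (Fin n₁) (Fin n₁) ℂ) - F₀)) := by
    have := (hGc.tendsto (-Fd⁻¹)).comp hEt
    rwa [hS0] at this
  have hsdet : IsUnit (s • (1 : Matrix (Fin n₁) (Fin n₁) ℂ) - F₀).det :=
    (Matrix.isUnit_iff_isUnit_det _).mp hs
  have hsdet' : (s • (1 : Matrix (Fin n₁) (Fin n₁) ℂ) - F₀).det ≠ 0 := hsdet.ne_zero
  have hSit : Tendsto (fun ε => (Sfun ε)⁻¹) l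
      (nhds ((s • (1 : Matrix (Fin n₁) (Fin n₁) ℂ) - F₀)⁻¹)) :=
    tendsto_matrix_inv' hSt hsdet'
  -- the limit candidate
  set X : Matrix (Fin n₁) (Fin n₁) ℂ := (s • (1 : Matrix (Fin n₁) (Fin n₁) ℂ) - F₀)⁻¹ with hX
  set E0 : Matrix (Fin n₂) (Fin n₂) ℂ := -Fd⁻¹ with hE0d
  set Ψ : ℝ → Matrix (Fin m) (Fin m) ℂ := fun ε =>
    (Ha * (Sfun ε)⁻¹ + Hb * (Efun ε * Fc * (Sfun ε)⁻¹)) * Ga +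
      (Ha * ((Sfun ε)⁻¹ * Fb * Efun ε) +
        Hb * (Efun ε + Efun ε * Fc * (Sfun ε)⁻¹ * Fb * Efun ε)) * Gb + K with hΨ
  have hGc2 : Continuous (fun p : Matrix (Fin n₂) (Fin n₂) ℂ × Matrix (Fin n₁) (Fin n₁) ℂ =>
      (Ha * p.2 + Hb * (p.1 * Fc * p.2)) * Ga +
        (Ha * (p.2 * Fb * p.1) + Hb * (p.1 + p.1 * Fc * p.2 * Fb * p.1)) * Gb + K) := by
    have h1 : Continuous (fun p : Matrix (Fin n₂) (Fin n₂) ℂ × Matrix (Fin n₁) (Fin n₁) ℂ => p.1) :=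
      continuous_fst
    have h2 : Continuous (fun p : Matrix (Fin n₂) (Fin n₂) ℂ × Matrix (Fin n₁) (Fin n₁) ℂ => p.2) :=
      continuous_snd
    exact (((continuous_const.matrix_mul h2).add
        (continuous_const.matrix_mul ((h1.matrix_mul continuous_const).matrix_mul h2))).matrix_mul
        continuous_const).add
      (((continuous_const.matrix_mul ((h2.matrix_mul continuous_const).matrix_mul h1)).add
        (continuous_const.matrix_mul
          (h1.add (((((h1.matrix_mul continuous_const).matrix_mul h2).matrix_mul
            continuous_const).matrix_mul h1))))).matrix_mul continuous_const) |>.add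
      continuous_const
  have hΨt : Tendsto Ψ l (nhds ((Ha * X + Hb * (E0 * Fc * X)) * Ga +
      (Ha * (X * Fb * E0) + Hb * (E0 + E0 * Fc * X * Fb * E0)) * Gb + K)) := by
    have := (hGc2.tendsto (E0, X)).comp (hEt.prodMk_nhds hSit)
    exact this
  have hlim : (Ha * X + Hb * (E0 * Fc * X)) * Ga +
      (Ha * (X * Fb * E0) + Hb * (E0 + E0 * Fc * X * Fb * E0)) * Gb + K = Φ₀ s := by
    rw [hΦ₀, hH₀, hG₀, hK₀, hE0d, ← hX]
    simp only [Matrix.sub_mul, Matrix.mul_sub, Matrix.mul_add, Matrix.add_mul, Matrix.mul_neg,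
      Matrix.neg_mul, neg_neg, sub_eq_add_neg, Matrix.mul_assoc]
    abel
  rw [hlim] at hΨt
  -- eventual equality
  have hev1 : ∀ᶠ ε in l, ε ∈ Set.Ioi (0 : ℝ) := eventually_mem_nhdsWithin
  have hev2 : ∀ᶠ ε in l, (Dfun ε).det ≠ 0 :=
    (((continuous_id.matrix_det).tendsto _).comp hDt).eventually_ne hD0det
  have hev3 : ∀ᶠ ε in l, (Sfun ε).det ≠ 0 :=
    (((continuous_id.matrix_det).tendsto _).comp hSt).eventually_ne hsdet'
  have heq : ∀ᶠ ε in l, Φ ε s = Ψ ε := by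
    filter_upwards [hev1, hev2, hev3] with ε h1 h2 h3
    rw [hΦ, hΨ]
    congr 1
    exact aux_eq Fa Fb Fc Fd Ga Gb Ha Hb s ε h1 (Efun ε) (Sfun ε) rfl rfl
      (Ne.isUnit h2) (Ne.isUnit h3)
  have hmain : Tendsto (fun ε => Φ ε s) l (nhds (Φ₀ s)) := by
    refine hΨt.congr' ?_
    filter_upwards [heq] with ε h using h.symm
  intro i j
  exact tendsto_pi_nhds.mp (tendsto_pi_nhds.mp hmain i) j
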